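/- Let t ≥ 3, and let G = G' + K_{k+2} be the disjoint union of a graph G' with a complete graph on k+2 vertices. Then G' can be made (t−1)K_2-free by at most k edge contractions if and only if G can be made tK_2-free by at most k edge contractions. -/

import Mathlib

variable {V W : Type*}

/-- Contraction of a graph by a partition (setoid): two classes are adjacent
iff they are distinct and joined by an edge of `G`. -/
def contractQ (G : SimpleGraph V) (s : Setoid V) : SimpleGraph (Quotient s) where
  Adj x y := x ≠ y ∧ ∃ a b : V, Quotient.mk s a = x ∧ Quotient.mk s b = y ∧ G.Adj a b
  symm := by
    constructor
    rintro x y ⟨hne, a, b, ha, hb, hab⟩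
    exact ⟨hne.symm, b, a, hb, ha, hab.symm⟩
  loopless := by
    constructor
    rintro x ⟨hne, -⟩
    exact hne rfl

/-- The partition of the vertices induced by contracting a set `F` of edges of `G`. -/
def edgeSetoid (G : SimpleGraph V) (F : Set (Sym2 V)) : Setoid V :=
  Relation.EqvGen.setoid (fun a b => G.Adj a b ∧ s(a, b) ∈ F)

/-- The graph `G/F` obtained from `G` by contracting the edges in `F`. -/
def contractE (G : SimpleGraph V) (F : Set (Sym2 V)) :
    SimpleGraph (Quotient (edgeSetoid G F)) := contractQ G (edgeSetoid G F)

/-- `G` contains an induced copy of `H`. -/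
def HasInducedCopy (H : SimpleGraph W) (G : SimpleGraph V) : Prop :=
  ∃ f : W ↪ V, ∀ a b : W, H.Adj a b ↔ G.Adj (f a) (f b)

/-- `G` can be turned into an `H`-free graph by contracting at most `k` of its edges. -/
def ContractsToFree (G : SimpleGraph V) (k : ℕ) (H : SimpleGraph W) : Prop :=
  ∃ F : Finset (Sym2 V), ↑F ⊆ G.edgeSet ∧ F.card ≤ k ∧
    ¬ HasInducedCopy H (contractE G (↑F : Set (Sym2 V)))

/-- The cost of the partition given by a setoid: the sum over classes of (size - 1). -/
noncomputable def setoidCost (s : Setoid V) : ℕ :=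
  ∑ᶠ c : Quotient s, ({v : V | Quotient.mk s v = c}.ncard - 1)

/-- The graph `tK_2`: the disjoint union of `t` edges. -/
def tK2 (t : ℕ) : SimpleGraph (Fin t × Fin 2) where
  Adj p q := p.1 = q.1 ∧ p.2 ≠ q.2
  symm := by constructor; rintro p q ⟨h1, h2⟩; exact ⟨h1.symm, h2.symm⟩
  loopless := by constructor; rintro p ⟨-, h⟩; exact h rfl

namespace Aux

open Sum Relation

variable {α β : Type*}

/-- The underlying one-step relation of `edgeSetoid`. -/
abbrev relOf (G : SimpleGraph α) (F : Set (Sym2 α)) : α → α → Prop :=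
  fun a b => G.Adj a b ∧ s(a, b) ∈ F

lemma mk_eq_mk_iff (G : SimpleGraph α) (F : Set (Sym2 α)) (u v : α) :
    (Quotient.mk (edgeSetoid G F) u = Quotient.mk (edgeSetoid G F) v) ↔
      Relation.EqvGen (relOf G F) u v :=
  ⟨fun h => Quotient.exact h, fun h => Quotient.sound h⟩

def Fl (F : Set (Sym2 (α ⊕ β))) : Set (Sym2 α) := Sym2.map Sum.inl ⁻¹' F
def Fr (F : Set (Sym2 (α ⊕ β))) : Set (Sym2 β) := Sym2.map Sum.inr ⁻¹' F

def sideProp (G : SimpleGraph α) (H : SimpleGraph β) (F : Set (Sym2 (α ⊕ β))) :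
    α ⊕ β → α ⊕ β → Prop
  | inl a, inl b => Relation.EqvGen (relOf G (Fl F)) a b
  | inr a, inr b => Relation.EqvGen (relOf H (Fr F)) a b
  | _, _ => False

variable {G : SimpleGraph α} {H : SimpleGraph β} {F : Set (Sym2 (α ⊕ β))}

lemma eqvGen_sideProp {x y : α ⊕ β} (h : Relation.EqvGen (relOf (G.sum H) F) x y) :
    sideProp G H F x y := by
  induction h with
  | rel x y h =>
    cases x <;> cases y
    · exact Relation.EqvGen.rel _ _ ⟨by simpa using h.1, by simpa [Fl, Sym2.map_pair_eq] using h.2⟩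
    · exact absurd h.1 (by simp)
    · exact absurd h.1 (by simp)
    · exact Relation.EqvGen.rel _ _ ⟨by simpa using h.1, by simpa [Fr, Sym2.map_pair_eq] using h.2⟩
  | refl x => cases x <;> exact Relation.EqvGen.refl _
  | symm x y h ih =>
    cases x <;> cases y <;> first | exact ih.elim | exact Relation.EqvGen.symm _ _ ih
  | trans x y z h1 h2 ih1 ih2 =>
    cases x <;> cases y <;> cases z <;>
      first | exact ih1.elim | exact ih2.elim | exact Relation.EqvGen.trans _ _ _ ih1 ih2

lemma eqvGen_inl {a b : α} (h : Relation.EqvGen (relOf G (Fl F)) a b) :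
    Relation.EqvGen (relOf (G.sum H) F) (inl a) (inl b) := by
  induction h with
  | rel x y h =>
    exact Relation.EqvGen.rel _ _ ⟨by simpa using h.1, by simpa [Fl, Sym2.map_pair_eq] using h.2⟩
  | refl x => exact Relation.EqvGen.refl _
  | symm x y h ih => exact Relation.EqvGen.symm _ _ ih
  | trans x y z h1 h2 ih1 ih2 => exact Relation.EqvGen.trans _ _ _ ih1 ih2

lemma eqvGen_inr {a b : β} (h : Relation.EqvGen (relOf H (Fr F)) a b) :
    Relation.EqvGen (relOf (G.sum H) F) (inr a) (inr b) := by
  induction h with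
  | rel x y h =>
    exact Relation.EqvGen.rel _ _ ⟨by simpa using h.1, by simpa [Fr, Sym2.map_pair_eq] using h.2⟩
  | refl x => exact Relation.EqvGen.refl _
  | symm x y h ih => exact Relation.EqvGen.symm _ _ ih
  | trans x y z h1 h2 ih1 ih2 => exact Relation.EqvGen.trans _ _ _ ih1 ih2

lemma not_eqvGen_inl_inr {a : α} {c : β}
    (h : Relation.EqvGen (relOf (G.sum H) F) (inl a) (inr c)) : False := eqvGen_sideProp h

lemma not_eqvGen_inr_inl {a : α} {c : β}
    (h : Relation.EqvGen (relOf (G.sum H) F) (inr c) (inl a)) : False := eqvGen_sideProp h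

lemma eqvGen_of_inl {a b : α} (h : Relation.EqvGen (relOf (G.sum H) F) (inl a) (inl b)) :
    Relation.EqvGen (relOf G (Fl F)) a b := eqvGen_sideProp h

lemma eqvGen_of_inr {a b : β} (h : Relation.EqvGen (relOf (G.sum H) F) (inr a) (inr b)) :
    Relation.EqvGen (relOf H (Fr F)) a b := eqvGen_sideProp h

lemma mk_inl_eq_inl {a b : α} :
    (Quotient.mk (edgeSetoid (G.sum H) F) (inl a) = Quotient.mk (edgeSetoid (G.sum H) F) (inl b))
      ↔ Quotient.mk (edgeSetoid G (Fl F)) a = Quotient.mk (edgeSetoid G (Fl F)) b := by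
  rw [mk_eq_mk_iff, mk_eq_mk_iff]
  exact ⟨eqvGen_of_inl, eqvGen_inl⟩

lemma mk_inr_eq_inr {a b : β} :
    (Quotient.mk (edgeSetoid (G.sum H) F) (inr a) = Quotient.mk (edgeSetoid (G.sum H) F) (inr b))
      ↔ Quotient.mk (edgeSetoid H (Fr F)) a = Quotient.mk (edgeSetoid H (Fr F)) b := by
  rw [mk_eq_mk_iff, mk_eq_mk_iff]
  exact ⟨eqvGen_of_inr, eqvGen_inr⟩

lemma mk_inl_ne_inr {a : α} {c : β} :
    Quotient.mk (edgeSetoid (G.sum H) F) (inl a) ≠ Quotient.mk (edgeSetoid (G.sum H) F) (inr c) :=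
  fun h => not_eqvGen_inl_inr ((mk_eq_mk_iff _ _ _ _).mp h)

lemma adj_inl_iff (a b : α) :
    (contractE (G.sum H) F).Adj (Quotient.mk _ (inl a)) (Quotient.mk _ (inl b)) ↔
      (contractE G (Fl F)).Adj (Quotient.mk _ a) (Quotient.mk _ b) := by
  constructor
  · rintro ⟨hne, x, y, hx, hy, hadj⟩
    cases x with
    | inr u => exact (not_eqvGen_inr_inl ((mk_eq_mk_iff _ _ _ _).mp hx)).elim
    | inl u =>
      cases y with
      | inr v => exact (not_eqvGen_inr_inl ((mk_eq_mk_iff _ _ _ _).mp hy)).elim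
      | inl v =>
        exact ⟨fun h => hne (mk_inl_eq_inl.mpr h), u, v, mk_inl_eq_inl.mp hx,
          mk_inl_eq_inl.mp hy, by simpa using hadj⟩
  · rintro ⟨hne, u, v, hu, hv, hadj⟩
    exact ⟨fun h => hne (mk_inl_eq_inl.mp h), inl u, inl v, mk_inl_eq_inl.mpr hu,
      mk_inl_eq_inl.mpr hv, by simpa using hadj⟩

lemma not_adj_inl_inr (a : α) (c : β) :
    ¬ (contractE (G.sum H) F).Adj (Quotient.mk _ (inl a)) (Quotient.mk _ (inr c)) := by
  rintro ⟨hne, x, y, hx, hy, hadj⟩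
  cases x with
  | inr u => exact not_eqvGen_inr_inl ((mk_eq_mk_iff _ _ _ _).mp hx)
  | inl u =>
    cases y with
    | inl v => exact not_eqvGen_inl_inr ((mk_eq_mk_iff _ _ _ _).mp hy)
    | inr v => simp at hadj

lemma map_inl_mem_edgeSet {e : Sym2 α} (he : e ∈ G.edgeSet) :
    Sym2.map Sum.inl e ∈ (G.sum H).edgeSet := by
  induction e using Sym2.ind with
  | _ a b => simpa [Sym2.map_pair_eq] using he

lemma of_map_inl_mem {e : Sym2 α} (he : Sym2.map Sum.inl e ∈ (G.sum H).edgeSet) :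
    e ∈ G.edgeSet := by
  induction e using Sym2.ind with
  | _ a b => simpa [Sym2.map_pair_eq] using he

lemma quot_step [Finite α] (G : SimpleGraph α) (F' : Set (Sym2 α)) (a b : α) :
    Nat.card (Quotient (edgeSetoid G F')) ≤
      Nat.card (Quotient (edgeSetoid G (insert s(a, b) F'))) + 1 := by
  classical
  set E' := Relation.EqvGen (relOf G F') with hE'
  set rel : α → α → Prop :=
    fun x y => E' x y ∨ (E' x a ∧ E' b y) ∨ (E' x b ∧ E' a y) with hrel
  have tr : ∀ {u v w}, E' u v → E' v w → E' u w := fun h1 h2 => Relation.EqvGen.trans _ _ _ h1 h2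
  have sy : ∀ {u v}, E' u v → E' v u := fun h => Relation.EqvGen.symm _ _ h
  have hequiv : Equivalence rel := by
    constructor
    · intro x; exact Or.inl (Relation.EqvGen.refl x)
    · intro x y h
      rcases h with h | ⟨h1, h2⟩ | ⟨h1, h2⟩
      · exact Or.inl (sy h)
      · exact Or.inr (Or.inr ⟨sy h2, sy h1⟩)
      · exact Or.inr (Or.inl ⟨sy h2, sy h1⟩)
    · intro x y z hxy hyz
      rcases hxy with h | ⟨h1, h2⟩ | ⟨h1, h2⟩ <;> rcases hyz with g | ⟨g1, g2⟩ | ⟨g1, g2⟩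
      · exact Or.inl (tr h g)
      · exact Or.inr (Or.inl ⟨tr h g1, g2⟩)
      · exact Or.inr (Or.inr ⟨tr h g1, g2⟩)
      · exact Or.inr (Or.inl ⟨h1, tr h2 g⟩)
      · exact Or.inl (tr (tr h1 (sy (tr h2 g1))) g2)
      · exact Or.inl (tr h1 g2)
      · exact Or.inr (Or.inr ⟨h1, tr h2 g⟩)
      · exact Or.inl (tr h1 g2)
      · exact Or.inr (Or.inr ⟨h1, g2⟩)
  have hgen : ∀ x y, relOf G (insert s(a, b) F') x y → rel x y := by
    rintro x y ⟨hadj, hmem⟩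
    rcases Set.mem_insert_iff.mp hmem with hm | hm
    · rcases Sym2.eq_iff.mp hm with ⟨rfl, rfl⟩ | ⟨rfl, rfl⟩
      · exact Or.inr (Or.inl ⟨Relation.EqvGen.refl _, Relation.EqvGen.refl _⟩)
      · exact Or.inr (Or.inr ⟨Relation.EqvGen.refl _, Relation.EqvGen.refl _⟩)
    · exact Or.inl (Relation.EqvGen.rel _ _ ⟨hadj, hm⟩)
  have key : ∀ x y, Relation.EqvGen (relOf G (insert s(a, b) F')) x y → rel x y := fun x y h =>
    hequiv.eqvGen_iff.mp (Relation.EqvGen.mono hgen _ _ h)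
  have hmono : ∀ u v, (edgeSetoid G F').r u v →
      Quotient.mk (edgeSetoid G (insert s(a, b) F')) u = Quotient.mk _ v := by
    intro u v h
    exact Quotient.sound (Relation.EqvGen.mono
      (fun x y hx => ⟨hx.1, Set.mem_insert_of_mem _ hx.2⟩) _ _ h)
  let f : Quotient (edgeSetoid G F') → Quotient (edgeSetoid G (insert s(a, b) F')) :=
    Quotient.lift (fun v => Quotient.mk _ v) hmono
  haveI : Fintype α := Fintype.ofFinite α
  haveI : Fintype (Quotient (edgeSetoid G F')) := Fintype.ofFinite _
  haveI : Fintype (Quotient (edgeSetoid G (insert s(a, b) F'))) := Fintype.ofFinite _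
  rw [Nat.card_eq_fintype_card, Nat.card_eq_fintype_card]
  set B := Quotient.mk (edgeSetoid G F') b with hB
  have h1 : (Finset.univ.erase B).card ≤
      (Finset.univ : Finset (Quotient (edgeSetoid G (insert s(a, b) F')))).card := by
    apply Finset.card_le_card_of_injOn f (fun x _ => Finset.mem_univ _)
    intro x hx y hy hfeq
    obtain ⟨u, rfl⟩ := Quotient.exists_rep x
    obtain ⟨v, rfl⟩ := Quotient.exists_rep y
    have hx' : Quotient.mk (edgeSetoid G F') u ≠ B := (Finset.mem_erase.mp hx).1
    have hy' : Quotient.mk (edgeSetoid G F') v ≠ B := (Finset.mem_erase.mp hy).1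
    have huv : Relation.EqvGen (relOf G (insert s(a, b) F')) u v := Quotient.exact hfeq
    rcases key u v huv with h | ⟨hh1, hh2⟩ | ⟨hh1, hh2⟩
    · exact Quotient.sound h
    · exact absurd (Quotient.sound (sy hh2) : Quotient.mk (edgeSetoid G F') v = B) hy'
    · exact absurd (Quotient.sound hh1 : Quotient.mk (edgeSetoid G F') u = B) hx'
  have h2 : (Finset.univ.erase B).card = Fintype.card (Quotient (edgeSetoid G F')) - 1 := by
    rw [Finset.card_erase_of_mem (Finset.mem_univ _), Finset.card_univ]
  rw [h2, Finset.card_univ] at h1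
  omega

lemma quot_card [Fintype α] (G : SimpleGraph α) (F : Finset (Sym2 α)) :
    Fintype.card α ≤ Nat.card (Quotient (edgeSetoid G (↑F : Set (Sym2 α)))) + F.card := by
  classical
  induction F using Finset.induction_on with
  | empty =>
    simp only [Finset.coe_empty, Finset.card_empty, add_zero]
    have hinj : Function.Injective (Quotient.mk (edgeSetoid G (∅ : Set (Sym2 α)))) := by
      intro u v h
      have h2 : Relation.EqvGen (relOf G (∅ : Set (Sym2 α))) u v := Quotient.exact h
      clear h
      induction h2 with
      | rel x y h => exact absurd h.2 (Set.notMem_empty _)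
      | refl x => rfl
      | symm x y h ih => exact ih.symm
      | trans x y z h1 h2 ih1 ih2 => exact ih1.trans ih2
    calc Fintype.card α = Nat.card α := (Nat.card_eq_fintype_card).symm
      _ ≤ Nat.card (Quotient (edgeSetoid G (∅ : Set (Sym2 α)))) :=
          Nat.card_le_card_of_injective _ hinj
  | @insert e F' he ih =>
    rw [Finset.coe_insert, Finset.card_insert_of_notMem he]
    clear he
    induction e using Sym2.ind with
    | _ a b =>
      have h1 := quot_step G (↑F' : Set (Sym2 α)) a b
      omega


lemma no_copy_sum {α : Type*} (G : SimpleGraph α) (W : Type*) (F : Set (Sym2 (α ⊕ W)))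
    {t : ℕ} (ht : 3 ≤ t)
    (hfree : ¬ HasInducedCopy (tK2 (t - 1)) (contractE G (Fl F))) :
    ¬ HasInducedCopy (tK2 t) (contractE (G.sum (⊤ : SimpleGraph W)) F) := by
  rintro ⟨f, hf⟩
  apply hfree
  classical
  set P : Fin t → Prop := fun i =>
    ∃ c, f (i, 0) = Quotient.mk (edgeSetoid (G.sum ⊤) F) (Sum.inr c) with hP
  have hP1 : ∀ i j, P i → P j → i = j := by
    rintro i j ⟨c, hc⟩ ⟨d, hd⟩
    by_contra hne
    have hfij : f (i, 0) ≠ f (j, 0) := fun h => hne (congrArg Prod.fst (f.injective h))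
    have hcd : c ≠ d := by rintro rfl; exact hfij (hc.trans hd.symm)
    have hadj : (contractE (G.sum ⊤) F).Adj (f (i, 0)) (f (j, 0)) := by
      rw [hc, hd]
      exact ⟨by rw [← hc, ← hd]; exact hfij, Sum.inr c, Sum.inr d, rfl, rfl, by simp [hcd]⟩
    exact ((hf _ _).mpr hadj).2 rfl
  have hcardP : Fintype.card {i : Fin t // P i} ≤ 1 :=
    Fintype.card_le_one_iff.mpr fun a b => Subtype.ext (hP1 _ _ a.2 b.2)
  have hcardNP : t - 1 ≤ Fintype.card {i : Fin t // ¬ P i} := by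
    rw [Fintype.card_subtype_compl, Fintype.card_fin]
    omega
  obtain ⟨ι⟩ := Function.Embedding.nonempty_of_card_le
    (α := Fin (t - 1)) (β := {i : Fin t // ¬ P i}) (by simpa using hcardNP)
  have hside0 : ∀ i : {i : Fin t // ¬ P i},
      ∃ a, f (i.1, 0) = Quotient.mk (edgeSetoid (G.sum ⊤) F) (Sum.inl a) := by
    intro i
    obtain ⟨v, hv⟩ := Quotient.exists_rep (f (i.1, 0))
    cases v with
    | inl a => exact ⟨a, hv.symm⟩
    | inr c => exact (i.2 ⟨c, hv.symm⟩).elim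
  have hside : ∀ (i : {i : Fin t // ¬ P i}) (j : Fin 2),
      ∃ a, f (i.1, j) = Quotient.mk (edgeSetoid (G.sum ⊤) F) (Sum.inl a) := by
    intro i j
    obtain ⟨a0, ha0⟩ := hside0 i
    obtain ⟨v, hv⟩ := Quotient.exists_rep (f (i.1, j))
    cases v with
    | inl a => exact ⟨a, hv.symm⟩
    | inr c =>
      exfalso
      have hj : j ≠ 0 := by rintro rfl; exact i.2 ⟨c, hv.symm⟩
      have hadj : (contractE (G.sum ⊤) F).Adj (f (i.1, 0)) (f (i.1, j)) :=
        (hf _ _).mp ⟨rfl, Ne.symm hj⟩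
      rw [ha0, ← hv] at hadj
      exact not_adj_inl_inr _ _ hadj
  choose av ha using hside
  refine ⟨⟨fun p => Quotient.mk (edgeSetoid G (Fl F)) (av (ι p.1) p.2), ?_⟩, ?_⟩
  · intro p q h
    have h2 : f ((ι p.1).1, p.2) = f ((ι q.1).1, q.2) := by
      rw [ha (ι p.1) p.2, ha (ι q.1) q.2]
      exact mk_inl_eq_inl.mpr h
    have h3 := f.injective h2
    rw [Prod.mk.injEq] at h3
    obtain ⟨h4, h5⟩ := h3
    exact Prod.ext (ι.injective (Subtype.ext h4)) h5
  · intro p q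
    constructor
    · rintro ⟨h1, h2⟩
      have hadj := (hf ((ι p.1).1, p.2) ((ι q.1).1, q.2)).mp ⟨by rw [h1], h2⟩
      rw [ha (ι p.1) p.2, ha (ι q.1) q.2] at hadj
      exact (adj_inl_iff _ _).mp hadj
    · intro h
      have hadj := (adj_inl_iff (H := (⊤ : SimpleGraph W)) (F := F) (av (ι p.1) p.2) (av (ι q.1) q.2)).mpr h
      rw [← ha (ι p.1) p.2, ← ha (ι q.1) q.2] at hadj
      obtain ⟨h1, h2⟩ := (hf _ _).mpr hadj
      exact ⟨ι.injective (Subtype.ext h1), h2⟩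

lemma copy_sum {α W : Type*} (G : SimpleGraph α) (F : Set (Sym2 (α ⊕ W)))
    {t : ℕ} (c d : W)
    (hnE : ¬ Relation.EqvGen (relOf (⊤ : SimpleGraph W) (Fr F)) c d)
    (hcopy : HasInducedCopy (tK2 (t - 1)) (contractE G (Fl F))) :
    HasInducedCopy (tK2 t) (contractE (G.sum (⊤ : SimpleGraph W)) F) := by
  classical
  obtain ⟨f, hf⟩ := hcopy
  have hcd : c ≠ d := fun h => hnE (h ▸ Relation.EqvGen.refl c)
  have hne_cd : Quotient.mk (edgeSetoid (G.sum (⊤ : SimpleGraph W)) F) (Sum.inr c) ≠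
      Quotient.mk (edgeSetoid (G.sum (⊤ : SimpleGraph W)) F) (Sum.inr d) :=
    fun h => hnE (eqvGen_of_inr ((mk_eq_mk_iff _ _ _ _).mp h))
  set g : Fin t × Fin 2 → Quotient (edgeSetoid (G.sum (⊤ : SimpleGraph W)) F) :=
    fun p => if hp : (p.1 : ℕ) < t - 1 then
      Quotient.mk (edgeSetoid (G.sum ⊤) F) (Sum.inl ((f (⟨(p.1 : ℕ), hp⟩, p.2)).out))
    else Quotient.mk (edgeSetoid (G.sum ⊤) F) (Sum.inr (if p.2 = 0 then c else d))
    with hg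
  have hg1 : ∀ (p : Fin t × Fin 2) (hp : (p.1 : ℕ) < t - 1),
      g p = Quotient.mk (edgeSetoid (G.sum ⊤) F)
        (Sum.inl ((f (⟨(p.1 : ℕ), hp⟩, p.2)).out)) := fun p hp => dif_pos hp
  have hg2 : ∀ (p : Fin t × Fin 2), ¬ (p.1 : ℕ) < t - 1 →
      g p = Quotient.mk (edgeSetoid (G.sum ⊤) F)
        (Sum.inr (if p.2 = 0 then c else d)) := fun p hp => dif_neg hp
  refine ⟨⟨g, ?_⟩, ?_⟩
  · intro p q h
    by_cases hp : (p.1 : ℕ) < t - 1 <;> by_cases hq : (q.1 : ℕ) < t - 1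
    · rw [hg1 p hp, hg1 q hq] at h
      have h2 := mk_inl_eq_inl.mp h
      rw [Quotient.out_eq, Quotient.out_eq] at h2
      have h3 := f.injective h2
      rw [Prod.mk.injEq, Fin.mk.injEq] at h3
      obtain ⟨h4, h5⟩ := h3
      exact Prod.ext (Fin.ext h4) h5
    · rw [hg1 p hp, hg2 q hq] at h
      exact absurd h mk_inl_ne_inr
    · rw [hg2 p hp, hg1 q hq] at h
      exact absurd h.symm mk_inl_ne_inr
    · rw [hg2 p hp, hg2 q hq] at h
      have hpv := p.1.isLt
      have hqv := q.1.isLt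
      have h1 : p.1 = q.1 := Fin.ext (by omega)
      by_cases hp2 : p.2 = 0 <;> by_cases hq2 : q.2 = 0
      · exact Prod.ext h1 (hp2.trans hq2.symm)
      · rw [if_pos hp2, if_neg hq2] at h
        exact absurd h hne_cd
      · rw [if_neg hp2, if_pos hq2] at h
        exact absurd h.symm hne_cd
      · refine Prod.ext h1 ?_
        have hpv2 := p.2.isLt
        have hqv2 := q.2.isLt
        have ha : (p.2 : ℕ) ≠ 0 := fun hh => hp2 (Fin.ext hh)
        have hb : (q.2 : ℕ) ≠ 0 := fun hh => hq2 (Fin.ext hh)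
        exact Fin.ext (by omega)
  · intro p q
    show (tK2 t).Adj p q ↔ (contractE (G.sum (⊤ : SimpleGraph W)) F).Adj (g p) (g q)
    by_cases hp : (p.1 : ℕ) < t - 1 <;> by_cases hq : (q.1 : ℕ) < t - 1
    · rw [hg1 p hp, hg1 q hq]
      constructor
      · rintro ⟨h1, h2⟩
        have hadj := (hf (⟨(p.1 : ℕ), hp⟩, p.2) (⟨(q.1 : ℕ), hq⟩, q.2)).mp
          ⟨by rw [Fin.mk.injEq]; exact congrArg Fin.val h1, h2⟩
        rw [← Quotient.out_eq (f (⟨(p.1 : ℕ), hp⟩, p.2)),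
          ← Quotient.out_eq (f (⟨(q.1 : ℕ), hq⟩, q.2))] at hadj
        exact (adj_inl_iff _ _).mpr hadj
      · intro h
        have hadj := (adj_inl_iff (F := F) _ _).mp h
        rw [Quotient.out_eq, Quotient.out_eq] at hadj
        obtain ⟨h1, h2⟩ := (hf _ _).mpr hadj
        rw [Fin.mk.injEq] at h1
        exact ⟨Fin.ext h1, h2⟩
    · rw [hg1 p hp, hg2 q hq]
      constructor
      · rintro ⟨h1, -⟩
        exact absurd (congrArg Fin.val h1) (by omega)
      · intro h
        exact absurd h (not_adj_inl_inr _ _)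
    · rw [hg2 p hp, hg1 q hq]
      constructor
      · rintro ⟨h1, -⟩
        exact absurd (congrArg Fin.val h1) (by omega)
      · intro h
        exact absurd h.symm (not_adj_inl_inr _ _)
    · rw [hg2 p hp, hg2 q hq]
      have hpv := p.1.isLt
      have hqv := q.1.isLt
      have h1 : p.1 = q.1 := Fin.ext (by omega)
      by_cases hp2 : p.2 = 0 <;> by_cases hq2 : q.2 = 0
      · rw [if_pos hp2, if_pos hq2]
        constructor
        · rintro ⟨-, h2⟩
          exact absurd (hp2.trans hq2.symm) h2
        · intro h
          exact absurd rfl h.1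
      · rw [if_pos hp2, if_neg hq2]
        constructor
        · intro _
          exact ⟨hne_cd, Sum.inr c, Sum.inr d, rfl, rfl, by simp [hcd]⟩
        · intro _
          exact ⟨h1, fun hh => hq2 (by rw [← hh, hp2])⟩
      · rw [if_neg hp2, if_pos hq2]
        constructor
        · intro _
          exact ⟨Ne.symm hne_cd, Sum.inr d, Sum.inr c, rfl, rfl, by simp [hcd.symm]⟩
        · intro _
          exact ⟨h1, fun hh => hp2 (by rw [hh, hq2])⟩
      · rw [if_neg hp2, if_neg hq2]
        constructor
        · rintro ⟨-, h2⟩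
          have hpv2 := p.2.isLt
          have hqv2 := q.2.isLt
          have ha : (p.2 : ℕ) ≠ 0 := fun hh => hp2 (Fin.ext hh)
          have hb : (q.2 : ℕ) ≠ 0 := fun hh => hq2 (Fin.ext hh)
          exact absurd (Fin.ext (by omega) : p.2 = q.2) h2
        · intro h
          exact absurd rfl h.1

end Aux

theorem disjoint_union_clique_iff {V : Type*} (G' : SimpleGraph V) (t k : ℕ)
    (ht : 3 ≤ t) :
    ContractsToFree G' k (tK2 (t - 1)) ↔
      ContractsToFree (G'.sum (⊤ : SimpleGraph (Fin (k + 2)))) k (tK2 t) := by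
  classical
  constructor
  · rintro ⟨F₀, hsub, hcard, hfree⟩
    refine ⟨F₀.map ⟨Sym2.map Sum.inl, Sym2.map.injective Sum.inl_injective⟩, ?_, ?_, ?_⟩
    · intro e he
      simp only [Finset.coe_map, Set.mem_image, Finset.mem_coe,
        Function.Embedding.coeFn_mk] at he
      obtain ⟨e', he', rfl⟩ := he
      exact Aux.map_inl_mem_edgeSet (hsub (Finset.mem_coe.mpr he'))
    · simpa using hcard
    · have hFl : Aux.Fl ((F₀.map ⟨Sym2.map Sum.inl, Sym2.map.injective Sum.inl_injective⟩ :
          Finset (Sym2 (V ⊕ Fin (k + 2)))) : Set (Sym2 (V ⊕ Fin (k + 2)))) =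
          (↑F₀ : Set (Sym2 V)) := by
        ext e
        simp only [Aux.Fl, Set.mem_preimage, Finset.coe_map, Set.mem_image, Finset.mem_coe,
          Function.Embedding.coeFn_mk]
        constructor
        · rintro ⟨e', he', heq⟩
          rwa [← Sym2.map.injective Sum.inl_injective heq]
        · intro he; exact ⟨e, he, rfl⟩
      exact Aux.no_copy_sum G' (Fin (k + 2)) _ ht (by rw [hFl]; exact hfree)
  · rintro ⟨F, hsub, hcard, hfree⟩
    refine ⟨F.preimage (Sym2.map Sum.inl) (Sym2.map.injective Sum.inl_injective).injOn, ?_, ?_, ?_⟩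
    · intro e he
      have h1 : Sym2.map Sum.inl e ∈ F := Finset.mem_preimage.mp (Finset.mem_coe.mp he)
      exact Aux.of_map_inl_mem (hsub (Finset.mem_coe.mpr h1))
    · refine le_trans ?_ hcard
      exact Finset.card_le_card_of_injOn (Sym2.map Sum.inl)
        (fun e he => Finset.mem_preimage.mp he)
        ((Sym2.map.injective Sum.inl_injective).injOn)
    · intro hcopy
      apply hfree
      have hFl : (↑(F.preimage (Sym2.map Sum.inl) (Sym2.map.injective Sum.inl_injective).injOn) :
          Set (Sym2 V)) = Aux.Fl (↑F : Set (Sym2 (V ⊕ Fin (k + 2)))) := by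
        rw [Finset.coe_preimage]; rfl
      rw [hFl] at hcopy
      -- find two distinct classes on the clique side
      have hF₂card : (F.preimage (Sym2.map Sum.inr)
          (Sym2.map.injective Sum.inr_injective).injOn).card ≤ k := by
        refine le_trans ?_ hcard
        exact Finset.card_le_card_of_injOn (Sym2.map Sum.inr)
          (fun e he => Finset.mem_preimage.mp he)
          ((Sym2.map.injective Sum.inr_injective).injOn)
      have hFr : (↑(F.preimage (Sym2.map Sum.inr)
          (Sym2.map.injective Sum.inr_injective).injOn) : Set (Sym2 (Fin (k + 2)))) =
          Aux.Fr (↑F : Set (Sym2 (V ⊕ Fin (k + 2)))) := by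
        rw [Finset.coe_preimage]; rfl
      have hq := Aux.quot_card (⊤ : SimpleGraph (Fin (k + 2)))
        (F.preimage (Sym2.map Sum.inr) (Sym2.map.injective Sum.inr_injective).injOn)
      rw [Fintype.card_fin, hFr] at hq
      haveI : Fintype (Quotient (edgeSetoid (⊤ : SimpleGraph (Fin (k + 2)))
          (Aux.Fr (↑F : Set (Sym2 (V ⊕ Fin (k + 2))))))) := Fintype.ofFinite _
      rw [Nat.card_eq_fintype_card] at hq
      haveI hnt : Nontrivial (Quotient (edgeSetoid (⊤ : SimpleGraph (Fin (k + 2)))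
          (Aux.Fr (↑F : Set (Sym2 (V ⊕ Fin (k + 2))))))) :=
        Fintype.one_lt_card_iff_nontrivial.mp (by omega)
      obtain ⟨x, y, hxy⟩ := exists_pair_ne (Quotient (edgeSetoid (⊤ : SimpleGraph (Fin (k + 2)))
          (Aux.Fr (↑F : Set (Sym2 (V ⊕ Fin (k + 2)))))))
      obtain ⟨c, hc⟩ := Quotient.exists_rep x
      obtain ⟨d, hd⟩ := Quotient.exists_rep y
      have hnE : ¬ Relation.EqvGen (Aux.relOf (⊤ : SimpleGraph (Fin (k + 2)))
          (Aux.Fr (↑F : Set (Sym2 (V ⊕ Fin (k + 2)))))) c d := by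
        intro h
        exact hxy (by rw [← hc, ← hd]; exact Quotient.sound h)
      exact Aux.copy_sum G' (↑F : Set (Sym2 (V ⊕ Fin (k + 2)))) c d hnE hcopy
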